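/- Define F : ℝ² → ℝ² by F(v) = (2 + 1/(1 + |v|)) v, where |·| is the Euclidean norm. Then F is Lipschitz continuous with constant 3 and strongly monotone with constant 2: for all v₁, v₂ ∈ ℝ², |F(v₁) − F(v₂)| ≤ 3 |v₁ − v₂| and (F(v₁) − F(v₂)) · (v₁ − v₂) ≥ 2 |v₁ − v₂|². -/

import Mathlib

open scoped RealInnerProductSpace

private lemma lip_aux (v₁ v₂ : EuclideanSpace ℝ (Fin 2)) (h : ‖v₂‖ ≤ ‖v₁‖) :
    ‖(2 + 1 / (1 + ‖v₁‖)) • v₁ - (2 + 1 / (1 + ‖v₂‖)) • v₂‖ ≤ 3 * ‖v₁ - v₂‖ := by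
  set A := ‖v₁‖ with hA
  set B := ‖v₂‖ with hB
  have ha : 0 ≤ A := norm_nonneg _
  have hb : 0 ≤ B := norm_nonneg _
  have h1a : (0:ℝ) < 1 + A := by linarith
  have h1b : (0:ℝ) < 1 + B := by linarith
  have hdecomp : (2 + 1 / (1 + A)) • v₁ - (2 + 1 / (1 + B)) • v₂
      = (2 + 1 / (1 + A)) • (v₁ - v₂) + (1 / (1 + A) - 1 / (1 + B)) • v₂ := by
    module
  rw [hdecomp]
  set D := ‖v₁ - v₂‖ with hDdef
  have hD0 : 0 ≤ D := norm_nonneg _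
  have hD : A - B ≤ D := by
    have := norm_sub_norm_le v₁ v₂; linarith [this]
  have habs : |1 / (1 + A) - 1 / (1 + B)| = (A - B) / ((1 + A) * (1 + B)) := by
    rw [abs_of_nonpos]
    · field_simp; ring
    · have : 1 / (1 + A) ≤ 1 / (1 + B) := by
        apply div_le_div_of_nonneg_left (by norm_num) h1b (by linarith)
      linarith
  calc ‖(2 + 1 / (1 + A)) • (v₁ - v₂) + (1 / (1 + A) - 1 / (1 + B)) • v₂‖
      ≤ ‖(2 + 1 / (1 + A)) • (v₁ - v₂)‖ + ‖(1 / (1 + A) - 1 / (1 + B)) • v₂‖ :=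
        norm_add_le _ _
    _ = (2 + 1 / (1 + A)) * D + (A - B) / ((1 + A) * (1 + B)) * B := by
        rw [norm_smul, norm_smul, Real.norm_eq_abs, Real.norm_eq_abs,
          abs_of_pos (by positivity), habs]
    _ ≤ 3 * D := by
        have e1 : (A - B) / ((1 + A) * (1 + B)) * B ≤ D * A / (1 + A) := by
          rw [div_mul_eq_mul_div, div_le_div_iff₀ (by positivity) h1a]
          have p1 : (A - B) * B ≤ D * A := by nlinarith
          nlinarith [mul_le_mul_of_nonneg_right p1 (le_of_lt h1a),
            mul_nonneg (mul_nonneg (mul_nonneg hD0 ha) (by linarith : (0:ℝ) ≤ 1 + A)) hb]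
        have e2 : 1 / (1 + A) * D + D * A / (1 + A) = D := by
          field_simp
        have e3 : (2 + 1 / (1 + A)) * D = 2 * D + 1 / (1 + A) * D := by ring
        linarith

private lemma mono_aux (v₁ v₂ : EuclideanSpace ℝ (Fin 2)) :
    2 * ‖v₁ - v₂‖ ^ 2 ≤
      ⟪(2 + 1 / (1 + ‖v₁‖)) • v₁ - (2 + 1 / (1 + ‖v₂‖)) • v₂, v₁ - v₂⟫ := by
  set A := ‖v₁‖ with hA
  set B := ‖v₂‖ with hB
  have ha : 0 ≤ A := norm_nonneg _
  have hb : 0 ≤ B := norm_nonneg _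
  have h1a : (0:ℝ) < 1 + A := by linarith
  have h1b : (0:ℝ) < 1 + B := by linarith
  have hdecomp : (2 + 1 / (1 + A)) • v₁ - (2 + 1 / (1 + B)) • v₂
      = (2:ℝ) • (v₁ - v₂) + ((1 / (1 + A)) • v₁ - (1 / (1 + B)) • v₂) := by
    module
  have htle : ⟪v₁, v₂⟫ ≤ A * B := real_inner_le_norm v₁ v₂
  set t := ⟪v₁, v₂⟫ with ht
  have hexp : ⟪(2 + 1 / (1 + A)) • v₁ - (2 + 1 / (1 + B)) • v₂, v₁ - v₂⟫
      = 2 * ‖v₁ - v₂‖ ^ 2 + (1 / (1 + A) * (A ^ 2 - t) - 1 / (1 + B) * (t - B ^ 2)) := by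
    have hns : ‖v₁ - v₂‖ ^ 2 = A ^ 2 - 2 * t + B ^ 2 := by
      rw [norm_sub_sq_real]
    have hc : ⟪v₂, v₁⟫ = t := by rw [ht, real_inner_comm]
    simp only [inner_sub_left, inner_sub_right, real_inner_smul_left,
      real_inner_self_eq_norm_sq, hc, ← ht, ← hA, ← hB, hns]
    ring
  rw [hexp]
  have key : 0 ≤ 1 / (1 + A) * (A ^ 2 - t) - 1 / (1 + B) * (t - B ^ 2) := by
    have hnum : 0 ≤ (A ^ 2 - t) * (1 + B) + (B ^ 2 - t) * (1 + A) := by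
      nlinarith [mul_nonneg (sub_nonneg.2 htle) (by linarith : (0:ℝ) ≤ 2 + A + B),
        sq_nonneg (A - B)]
    have heq : 1 / (1 + A) * (A ^ 2 - t) - 1 / (1 + B) * (t - B ^ 2)
        = ((A ^ 2 - t) * (1 + B) + (B ^ 2 - t) * (1 + A)) / ((1 + A) * (1 + B)) := by
      field_simp; ring
    rw [heq]
    positivity
  linarith

/-- **Example 1 of the paper.** The map `F : ℝ² → ℝ²`, `F v = (2 + 1/(1 + |v|)) v`,
is Lipschitz continuous with constant `3` and strongly monotone with constant `2`. -/
theorem example1_lipschitz_and_monotone :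
    let F : EuclideanSpace ℝ (Fin 2) → EuclideanSpace ℝ (Fin 2) :=
      fun v => (2 + 1 / (1 + ‖v‖)) • v
    (∀ v₁ v₂ : EuclideanSpace ℝ (Fin 2), ‖F v₁ - F v₂‖ ≤ 3 * ‖v₁ - v₂‖) ∧
    (∀ v₁ v₂ : EuclideanSpace ℝ (Fin 2),
      2 * ‖v₁ - v₂‖ ^ 2 ≤ ⟪F v₁ - F v₂, v₁ - v₂⟫) := by
  intro F
  constructor
  · intro v₁ v₂
    rcases le_total ‖v₂‖ ‖v₁‖ with h | h
    · exact lip_aux v₁ v₂ h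
    · calc ‖F v₁ - F v₂‖ = ‖F v₂ - F v₁‖ := norm_sub_rev _ _
        _ ≤ 3 * ‖v₂ - v₁‖ := lip_aux v₂ v₁ h
        _ = 3 * ‖v₁ - v₂‖ := by rw [norm_sub_rev]
  · intro v₁ v₂
    exact mono_aux v₁ v₂
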